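/- Let r ≥ 1 and set m = ⌈r⌉ + 2. Let Q₁,…,Q_m and Q'₁,…,Q'_m be two families of axes-aligned r-fat rectangles such that the rectangles within each family are pairwise disjoint. Then there exist indices i and j such that Q_i and Q'_j are disjoint. -/

import Mathlib

open MeasureTheory

noncomputable section

/-- A point of the plane. -/
abbrev Pt := ℝ × ℝ

/-- The ℓ∞ distance between two points of the plane. -/
def linfDist (p q : Pt) : ℝ := max |p.1 - q.1| |p.2 - q.2|

/-- Two pieces of land are `s`-separated: every pair of points, one from each piece,
is at ℓ∞ distance at least `s`. -/
def SepSets (s : ℝ) (A B : Set Pt) : Prop := ∀ p ∈ A, ∀ q ∈ B, s ≤ linfDist p q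

/-- An axes-aligned rectangle `[a,b] × [c,d]` with `a < b` and `c < d`. -/
structure Rect where
  a : ℝ
  b : ℝ
  c : ℝ
  d : ℝ
  hab : a < b
  hcd : c < d

/-- The set of points of a rectangle. -/
def Rect.set (R : Rect) : Set Pt := Set.Icc R.a R.b ×ˢ Set.Icc R.c R.d

/-- The length of the shorter side of a rectangle. -/
def Rect.short (R : Rect) : ℝ := min (R.b - R.a) (R.d - R.c)

/-- The length of the longer side of a rectangle. -/
def Rect.long (R : Rect) : ℝ := max (R.b - R.a) (R.d - R.c)

/-- A rectangle is `r`-fat if its longer side is at most `r` times its shorter side. -/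
def Rect.Fat (r : ℝ) (R : Rect) : Prop := R.long ≤ r * R.short

/-- The value of a piece `Z` under the density `f`. -/
def val (f : Pt → ℝ) (Z : Set Pt) : ℝ := ∫ p in Z, f p

/-- The 1-out-of-`k` maximin share of an agent with density `f` on land `L`
with separation parameter `s`: the supremum over families of `k` axes-aligned
rectangles inside `L`, pairwise intersecting in zero measure and pairwise
`s`-separated, of the minimum value of a rectangle. -/
def MMS (f : Pt → ℝ) (L : Set Pt) (s : ℝ) (k : ℕ) : ℝ :=
  sSup {t : ℝ | ∃ P : Fin k → Rect,
    (∀ j, (P j).set ⊆ L) ∧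
    (∀ i j, i ≠ j → volume ((P i).set ∩ (P j).set) = 0) ∧
    (∀ i j, i ≠ j → SepSets s ((P i).set) ((P j).set)) ∧
    (∀ j, t ≤ val f ((P j).set))}

/-- A valuation given by density `f` is `s`-normalized: there are finitely many
pairwise `s`-separated axes-aligned rectangles, each of value at most 1,
such that `f` vanishes outside their union. -/
def SNormalized (s : ℝ) (f : Pt → ℝ) : Prop :=
  ∃ (N : ℕ) (Q : Fin N → Rect),
    (∀ i j, i ≠ j → SepSets s ((Q i).set) ((Q j).set)) ∧
    (∀ i, val f ((Q i).set) ≤ 1) ∧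
    (∀ p, p ∉ ⋃ i, (Q i).set → f p = 0)

/-- The unit square `[0,1] × [0,1]`. -/
def unitSquare : Set Pt := Set.Icc (0 : ℝ) 1 ×ˢ Set.Icc (0 : ℝ) 1

/-- `Guillotine s a0 a1 b0 b1 P`: the family `P` of rectangles forms an
`s`-separated guillotine partition of `[a0,a1] × [b0,b1]`. -/
inductive Guillotine (s : ℝ) : ℝ → ℝ → ℝ → ℝ → List Rect → Prop
  | single (a0 a1 b0 b1 : ℝ) (P : Rect)
      (h : P.set ⊆ Set.Icc a0 a1 ×ˢ Set.Icc b0 b1) :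
      Guillotine s a0 a1 b0 b1 [P]
  | vert (a0 a1 b0 b1 a : ℝ) (h1 : a0 < a) (h2 : a < a1 - s)
      (P1 P2 : List Rect)
      (g1 : Guillotine s a0 a b0 b1 P1)
      (g2 : Guillotine s (a + s) a1 b0 b1 P2) :
      Guillotine s a0 a1 b0 b1 (P1 ++ P2)
  | horiz (a0 a1 b0 b1 b : ℝ) (h1 : b0 < b) (h2 : b < b1 - s)
      (P1 P2 : List Rect)
      (g1 : Guillotine s a0 a1 b0 b P1)
      (g2 : Guillotine s a0 a1 (b + s) b1 P2) :
      Guillotine s a0 a1 b0 b1 (P1 ++ P2)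


/-- Two rectangles overlap (positive-measure intersection) iff both coordinate
intervals strictly overlap. -/
def Ov (R S : Rect) : Prop :=
  max R.a S.a < min R.b S.b ∧ max R.c S.c < min R.d S.d

lemma Ov.symm' {R S : Rect} (h : Ov R S) : Ov S R := by
  obtain ⟨h1, h2⟩ := h
  exact ⟨by rw [max_comm, min_comm]; exact h1, by rw [max_comm, min_comm]; exact h2⟩

lemma vol_inter_eq_zero_iff (R S : Rect) :
    volume (R.set ∩ S.set) = 0 ↔ ¬ Ov R S := by
  have h1 : R.set ∩ S.set
      = Set.Icc (max R.a S.a) (min R.b S.b) ×ˢ Set.Icc (max R.c S.c) (min R.d S.d) := by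
    rw [Rect.set, Rect.set, Set.prod_inter_prod, Set.Icc_inter_Icc, Set.Icc_inter_Icc]
  rw [h1, MeasureTheory.Measure.volume_eq_prod, MeasureTheory.Measure.prod_prod,
    Real.volume_Icc, Real.volume_Icc, mul_eq_zero, ENNReal.ofReal_eq_zero,
    ENNReal.ofReal_eq_zero]
  simp only [Ov, not_and_or, not_lt, sub_nonpos]

lemma width_le_r_height {r : ℝ} (hr : 1 ≤ r) {R : Rect} (h : R.Fat r) :
    R.b - R.a ≤ r * (R.d - R.c) := by
  have h1 : R.b - R.a ≤ R.long := le_max_left _ _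
  have h2 : R.short ≤ R.d - R.c := min_le_right _ _
  have h3 : R.long ≤ r * R.short := h
  nlinarith [h1, h2, h3, hr]

lemma height_le_r_width {r : ℝ} (hr : 1 ≤ r) {R : Rect} (h : R.Fat r) :
    R.d - R.c ≤ r * (R.b - R.a) := by
  have h1 : R.d - R.c ≤ R.long := le_max_right _ _
  have h2 : R.short ≤ R.b - R.a := min_le_left _ _
  have h3 : R.long ≤ r * R.short := h
  nlinarith [h1, h2, h3, hr]

/-- Sum of lengths of pairwise non-overlapping intervals inside `[L,U]`. -/
lemma chain_sum_le {ι : Type*} (S : Finset ι) (hne : S.Nonempty)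
    (a b : ι → ℝ) (hab : ∀ i ∈ S, a i < b i)
    (hsep : ∀ i ∈ S, ∀ j ∈ S, i ≠ j → b i ≤ a j ∨ b j ≤ a i)
    (L U : ℝ) (hin : ∀ i ∈ S, L ≤ a i ∧ b i ≤ U) :
    ∑ i ∈ S, (b i - a i) ≤ U - L := by
  have hd : (↑S : Set ι).PairwiseDisjoint (fun i => Set.Ioc (a i) (b i)) := by
    intro i hi j hj hij
    rcases hsep i (by simpa using hi) j (by simpa using hj) hij with h | h
    · exact Set.Ioc_disjoint_Ioc.mpr (le_trans (min_le_left _ _) (le_trans h (le_max_right _ _)))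
    · exact Set.Ioc_disjoint_Ioc.mpr (le_trans (min_le_right _ _) (le_trans h (le_max_left _ _)))
  have hμ := measure_biUnion_finset (μ := volume) hd (fun i _ => measurableSet_Ioc)
  have hsub : (⋃ i ∈ S, Set.Ioc (a i) (b i)) ⊆ Set.Ioc L U := by
    intro x hx
    simp only [Set.mem_iUnion] at hx
    obtain ⟨i, hi, hx⟩ := hx
    exact ⟨lt_of_le_of_lt (hin i hi).1 hx.1, le_trans hx.2 (hin i hi).2⟩
  have hle : ∑ i ∈ S, volume (Set.Ioc (a i) (b i)) ≤ volume (Set.Ioc L U) :=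
    hμ ▸ measure_mono hsub
  simp only [Real.volume_Ioc] at hle
  rw [← ENNReal.ofReal_sum_of_nonneg (fun i hi => by linarith [hab i hi])] at hle
  have h0 : 0 ≤ U - L := by
    obtain ⟨i, hi⟩ := hne
    have := hab i hi; have := hin i hi
    linarith [this.1, this.2]
  exact (ENNReal.ofReal_le_ofReal_iff h0).mp hle

lemma core (r : ℝ) (hr : 1 ≤ r) (m : ℕ) (hm3 : 3 ≤ m) (hmr : r ≤ (m : ℝ) - 2)
    (Q Q' : Fin m → Rect)
    (hQfat : ∀ i, (Q i).Fat r) (hQ'fat : ∀ i, (Q' i).Fat r)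
    (hQd : ∀ i j, i ≠ j → ¬ Ov (Q i) (Q j))
    (hQ'd : ∀ i j, i ≠ j → ¬ Ov (Q' i) (Q' j))
    (i0 : Fin m) (hi0 : ∀ j, (Q i0).d ≤ (Q' j).d)
    (hov : ∀ i j, Ov (Q i) (Q' j)) : False := by
  have hr0 : (0 : ℝ) < r := lt_of_lt_of_le one_pos hr
  have huniv : (Finset.univ : Finset (Fin m)).Nonempty :=
    ⟨⟨0, by omega⟩, Finset.mem_univ _⟩
  -- all Q' pairwise y-overlap
  have hcd0 : ∀ j, (Q' j).c < (Q i0).d := by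
    intro j
    have h := (hov i0 j).2
    exact lt_of_le_of_lt (le_max_right _ _) (lt_of_lt_of_le h (min_le_left _ _))
  have hyov : ∀ j k, max (Q' j).c (Q' k).c < min (Q' j).d (Q' k).d := fun j k =>
    lt_of_lt_of_le (max_lt (hcd0 j) (hcd0 k)) (le_min (hi0 j) (hi0 k))
  -- hence Q' pairwise x-separated
  have hxsep : ∀ j k, j ≠ k → (Q' j).b ≤ (Q' k).a ∨ (Q' k).b ≤ (Q' j).a := by
    intro j k hjk
    by_contra hc
    push_neg at hc
    exact hQ'd j k hjk
      ⟨max_lt (lt_min (Q' j).hab hc.2) (lt_min hc.1 (Q' k).hab), hyov j k⟩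
  obtain ⟨j1, -, hj1⟩ := Finset.exists_min_image Finset.univ (fun j => (Q' j).b) huniv
  obtain ⟨jm, -, hjm⟩ := Finset.exists_max_image Finset.univ (fun j => (Q' j).a) huniv
  simp only [Finset.mem_univ, forall_true_left, true_implies] at hj1 hjm
  set L : ℝ := (Q' j1).b with hL
  set U : ℝ := (Q' jm).a with hU
  have hmidQ' : ∀ j, j ≠ j1 → j ≠ jm → L ≤ (Q' j).a ∧ (Q' j).b ≤ U := by
    intro j h1 h2
    constructor
    · rcases hxsep j j1 h1 with h | h
      · exfalso; have := hj1 j; have := (Q' j1).hab; linarith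
      · exact h
    · rcases hxsep j jm h2 with h | h
      · exact h
      · exfalso; have := hjm j; have := (Q' jm).hab; linarith
  -- a middle element exists
  have hex : ∃ j : Fin m, j ≠ j1 ∧ j ≠ jm := by
    by_contra h
    push_neg at h
    have hsub : (Finset.univ : Finset (Fin m)) ⊆ {j1, jm} := by
      intro j _
      rcases eq_or_ne j j1 with rfl | hne
      · simp
      · simp [h j hne]
    have hcard := Finset.card_le_card hsub
    have h2 : ({j1, jm} : Finset (Fin m)).card ≤ 2 :=
      le_trans (Finset.card_insert_le _ _) (by simp)
    simp only [Finset.card_univ, Fintype.card_fin] at hcard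
    omega
  obtain ⟨js, hjs1, hjsm⟩ := hex
  have hLU : L < U := by
    have h1 := (hmidQ' js hjs1 hjsm).1
    have h2 := (hmidQ' js hjs1 hjsm).2
    have := (Q' js).hab
    linarith
  -- every Q i spans (L, U) horizontally
  have hQx : ∀ i, (Q i).a < L ∧ U < (Q i).b := by
    intro i
    constructor
    · exact lt_of_le_of_lt (le_max_left _ _)
        (lt_of_lt_of_le (hov i j1).1 (min_le_right _ _))
    · exact lt_of_le_of_lt (le_max_right _ _)
        (lt_of_lt_of_le (hov i jm).1 (min_le_left _ _))
  -- hence Q pairwise y-separated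
  have hysep : ∀ i k, i ≠ k → (Q i).d ≤ (Q k).c ∨ (Q k).d ≤ (Q i).c := by
    intro i k hik
    by_contra hc
    push_neg at hc
    obtain ⟨hi1, hi2⟩ := hQx i
    obtain ⟨hk1, hk2⟩ := hQx k
    refine hQd i k hik ⟨?_, max_lt (lt_min (Q i).hcd hc.2) (lt_min hc.1 (Q k).hcd)⟩
    exact max_lt (lt_min (Q i).hab (by linarith)) (lt_min (by linarith) (Q k).hab)
  obtain ⟨i1, -, hi1⟩ := Finset.exists_min_image Finset.univ (fun i => (Q i).d) huniv
  obtain ⟨im, -, him⟩ := Finset.exists_max_image Finset.univ (fun i => (Q i).c) huniv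
  simp only [Finset.mem_univ, forall_true_left, true_implies] at hi1 him
  set L' : ℝ := (Q i1).d with hL'
  set U' : ℝ := (Q im).c with hU'
  have hmidQ : ∀ i, i ≠ i1 → i ≠ im → L' ≤ (Q i).c ∧ (Q i).d ≤ U' := by
    intro i h1 h2
    constructor
    · rcases hysep i i1 h1 with h | h
      · exfalso; have := hi1 i; have := (Q i1).hcd; linarith
      · exact h
    · rcases hysep i im h2 with h | h
      · exact h
      · exfalso; have := him i; have := (Q im).hcd; linarith
  -- card bounds for middle sets
  have hcard2 : ∀ x y : Fin m, ({x, y} : Finset (Fin m)).card ≤ 2 := fun x y =>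
    le_trans (Finset.card_insert_le _ _) (by simp)
  have hScard : ∀ x y : Fin m, m - 2 ≤ (Finset.univ \ {x, y} : Finset (Fin m)).card := by
    intro x y
    have := Finset.card_sdiff_of_subset (Finset.subset_univ ({x, y} : Finset (Fin m)))
    rw [this, Finset.card_univ, Fintype.card_fin]
    have := hcard2 x y
    omega
  have hSne : ∀ x y : Fin m, (Finset.univ \ {x, y} : Finset (Fin m)).Nonempty := by
    intro x y
    rw [← Finset.card_pos]
    have := hScard x y
    omega
  have hmemS : ∀ x y i : Fin m, i ∈ (Finset.univ \ {x, y} : Finset (Fin m)) ↔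
      i ≠ x ∧ i ≠ y := by
    intro x y i
    simp [Finset.mem_sdiff]
  set M : ℝ := (m : ℝ) - 2 with hM
  have hMr : 0 < M := lt_of_lt_of_le hr0 hmr
  have hMcast : ∀ x y : Fin m,
      M ≤ ((Finset.univ \ {x, y} : Finset (Fin m)).card : ℝ) := by
    intro x y
    have h1 := hScard x y
    have : (m : ℝ) ≤ ((Finset.univ \ {x, y} : Finset (Fin m)).card : ℝ) + 2 := by
      have : m ≤ (Finset.univ \ {x, y} : Finset (Fin m)).card + 2 := by omega
      exact_mod_cast this
    linarith
  -- first sum: heights of middle Q's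
  set S : Finset (Fin m) := Finset.univ \ {i1, im} with hS
  have hsum1 : ∑ i ∈ S, ((Q i).d - (Q i).c) ≤ U' - L' := by
    refine chain_sum_le S (hSne i1 im) _ _ (fun i _ => (Q i).hcd) ?_ L' U' ?_
    · intro i _ j _ hij; exact hysep i j hij
    · intro i hi
      rw [hS, hmemS] at hi
      exact hmidQ i hi.1 hi.2
  have hA : 0 < U - L := by linarith
  have h1 : M * (U - L) < r * (U' - L') := by
    have hlt : ∀ i ∈ S, U - L < r * ((Q i).d - (Q i).c) := by
      intro i _
      have h2 := width_le_r_height hr (hQfat i)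
      have h3 := (hQx i).1
      have h4 := (hQx i).2
      linarith
    have := Finset.sum_lt_sum_of_nonempty (hSne i1 im) hlt
    rw [Finset.sum_const, ← Finset.mul_sum] at this
    have hcard := hMcast i1 im
    have h5 : M * (U - L) ≤ (S.card : ℝ) * (U - L) :=
      mul_le_mul_of_nonneg_right hcard (le_of_lt hA)
    have h6 : r * (∑ i ∈ S, ((Q i).d - (Q i).c)) ≤ r * (U' - L') :=
      mul_le_mul_of_nonneg_left hsum1 (le_of_lt hr0)
    calc M * (U - L) ≤ (S.card : ℝ) * (U - L) := h5
      _ = S.card • (U - L) := by rw [nsmul_eq_mul]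
      _ < r * ∑ i ∈ S, ((Q i).d - (Q i).c) := this
      _ ≤ r * (U' - L') := h6
  have hB : 0 < U' - L' := by nlinarith
  -- every Q' j spans (L', U') vertically
  have hQ'y : ∀ j, (Q' j).c < L' ∧ U' < (Q' j).d := by
    intro j
    constructor
    · exact lt_of_le_of_lt (le_max_right _ _)
        (lt_of_lt_of_le (hov i1 j).2 (min_le_left _ _))
    · exact lt_of_le_of_lt (le_max_left _ _)
        (lt_of_lt_of_le (hov im j).2 (min_le_right _ _))
  -- second sum: widths of middle Q's
  set S' : Finset (Fin m) := Finset.univ \ {j1, jm} with hS'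
  have hsum2 : ∑ j ∈ S', ((Q' j).b - (Q' j).a) ≤ U - L := by
    refine chain_sum_le S' (hSne j1 jm) _ _ (fun j _ => (Q' j).hab) ?_ L U ?_
    · intro i _ j _ hij; exact hxsep i j hij
    · intro j hj
      rw [hS', hmemS] at hj
      exact hmidQ' j hj.1 hj.2
  have h2 : M * (U' - L') < r * (U - L) := by
    have hlt : ∀ j ∈ S', U' - L' < r * ((Q' j).b - (Q' j).a) := by
      intro j _
      have h2 := height_le_r_width hr (hQ'fat j)
      have h3 := (hQ'y j).1
      have h4 := (hQ'y j).2
      linarith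
    have := Finset.sum_lt_sum_of_nonempty (hSne j1 jm) hlt
    rw [Finset.sum_const, ← Finset.mul_sum] at this
    have hcard := hMcast j1 jm
    have h5 : M * (U' - L') ≤ (S'.card : ℝ) * (U' - L') :=
      mul_le_mul_of_nonneg_right hcard (le_of_lt hB)
    have h6 : r * (∑ j ∈ S', ((Q' j).b - (Q' j).a)) ≤ r * (U - L) :=
      mul_le_mul_of_nonneg_left hsum2 (le_of_lt hr0)
    calc M * (U' - L') ≤ (S'.card : ℝ) * (U' - L') := h5
      _ = S'.card • (U' - L') := by rw [nsmul_eq_mul]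
      _ < r * ∑ j ∈ S', ((Q' j).b - (Q' j).a) := this
      _ ≤ r * (U - L) := h6
  -- contradiction: M²(U-L) < r²(U-L) with r ≤ M
  nlinarith [mul_lt_mul_of_pos_left h1 hr0, mul_lt_mul_of_pos_left h2 hMr,
    mul_le_mul hmr hmr (le_of_lt hr0) (le_of_lt hMr), hA, hB]

/-- Among two families of `⌈r⌉+2` pairwise disjoint `r`-fat rectangles each,
some rectangle from the first family is disjoint from some rectangle of the
second family. -/
theorem stmt3 (r : ℝ) (hr : 1 ≤ r) (m : ℕ) (hm : (m : ℤ) = ⌈r⌉ + 2)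
    (Q Q' : Fin m → Rect)
    (hQfat : ∀ i, (Q i).Fat r) (hQ'fat : ∀ i, (Q' i).Fat r)
    (hQdisj : ∀ i j, i ≠ j → volume ((Q i).set ∩ (Q j).set) = 0)
    (hQ'disj : ∀ i j, i ≠ j → volume ((Q' i).set ∩ (Q' j).set) = 0) :
    ∃ i j, volume ((Q i).set ∩ (Q' j).set) = 0 := by
  by_contra hcon
  push_neg at hcon
  have hov : ∀ i j, Ov (Q i) (Q' j) := by
    intro i j
    by_contra h
    exact hcon i j ((vol_inter_eq_zero_iff _ _).mpr h)
  have hQd : ∀ i j, i ≠ j → ¬ Ov (Q i) (Q j) := fun i j h =>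
    (vol_inter_eq_zero_iff _ _).mp (hQdisj i j h)
  have hQ'd : ∀ i j, i ≠ j → ¬ Ov (Q' i) (Q' j) := fun i j h =>
    (vol_inter_eq_zero_iff _ _).mp (hQ'disj i j h)
  have hceil : (1 : ℤ) ≤ ⌈r⌉ := by
    have := Int.ceil_le_ceil hr
    simpa using this
  have hm3 : 3 ≤ m := by omega
  have hmr : r ≤ (m : ℝ) - 2 := by
    have h1 : ((m : ℤ) : ℝ) = ((⌈r⌉ : ℤ) : ℝ) + 2 := by exact_mod_cast hm
    have h2 := Int.le_ceil r
    push_cast at h1 h2 ⊢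
    linarith
  have huniv : (Finset.univ : Finset (Fin m)).Nonempty :=
    ⟨⟨0, by omega⟩, Finset.mem_univ _⟩
  obtain ⟨i0, -, hi0⟩ := Finset.exists_min_image Finset.univ (fun i => (Q i).d) huniv
  obtain ⟨j0, -, hj0⟩ := Finset.exists_min_image Finset.univ (fun j => (Q' j).d) huniv
  simp only [Finset.mem_univ, forall_true_left, true_implies] at hi0 hj0
  rcases le_total ((Q i0).d) ((Q' j0).d) with h | h
  · exact core r hr m hm3 hmr Q Q' hQfat hQ'fat hQd hQ'd i0
      (fun j => le_trans h (hj0 j)) hov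
  · exact core r hr m hm3 hmr Q' Q hQ'fat hQfat hQ'd hQd j0
      (fun i => le_trans h (hi0 i)) (fun j i => (hov i j).symm')
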